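/- Let 2 ≤ k ≤ n. There exists a positive constant c₀ depending only on n and k such that for every λ ∈ Γ_k, σ_{k−1}(λ) ≥ c₀ · σ_k(λ)^{1 − 1/(k−1)} · σ_1(λ)^{1/(k−1)}. -/

import Mathlib

open Finset MeasureTheory Metric Set Bornology Matrix

/-- The `k`-th elementary symmetric function of `x ∈ ℝⁿ`. -/
noncomputable def esymm (n k : ℕ) (x : Fin n → ℝ) : ℝ :=
  ∑ s ∈ Finset.powersetCard k (Finset.univ : Finset (Fin n)), ∏ i ∈ s, x i

/-- The Gårding cone `Γ_k = {λ : σ_i(λ) > 0 for 1 ≤ i ≤ k}`. -/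
def GammaCone (n k : ℕ) : Set (Fin n → ℝ) :=
  {x | ∀ i : ℕ, 1 ≤ i → i ≤ k → 0 < esymm n i x}

/-- `η_i(κ) = ∑_{j ≠ i} κ_j`. -/
def etaVec {n : ℕ} (x : Fin n → ℝ) : Fin n → ℝ :=
  fun i => ∑ j ∈ Finset.univ.erase i, x j

/-- The cone `Γ̃_k = {κ : σ_i(η(κ)) > 0 for 1 ≤ i ≤ k}`. -/
def GammaTilde (n k : ℕ) : Set (Fin n → ℝ) := {x | etaVec x ∈ GammaCone n k}

/-- `σ_k(x|i)`: the `k`-th elementary symmetric function of `x` with the `i`-th entry removed. -/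
noncomputable def esymmRemoved (n k : ℕ) (i : Fin n) (x : Fin n → ℝ) : ℝ :=
  ∑ s ∈ Finset.powersetCard k ((Finset.univ : Finset (Fin n)).erase i), ∏ j ∈ s, x j


lemma esymm_eq_multiset (n k : ℕ) (x : Fin n → ℝ) :
    esymm n k x = (Finset.univ.val.map x).esymm k := by
  rw [Finset.esymm_map_val]; rfl

lemma esymm_zero' (n : ℕ) (x : Fin n → ℝ) : esymm n 0 x = 1 := by
  simp [esymm]

lemma esymm_one' (n : ℕ) (x : Fin n → ℝ) : esymm n 1 x = ∑ i, x i := by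
  simp [esymm, Finset.powersetCard_one, Finset.sum_map]

lemma esymm_top (n : ℕ) (x : Fin n → ℝ) : esymm n n x = ∏ i, x i := by
  rw [esymm]
  have h : Finset.powersetCard n (Finset.univ : Finset (Fin n)) = {Finset.univ} := by
    have := Finset.powersetCard_self (Finset.univ : Finset (Fin n))
    simpa using this
  rw [h, Finset.sum_singleton]

lemma multiset_to_vec (s : Multiset ℝ) (n : ℕ) (h : Multiset.card s = n) :
    ∃ x : Fin n → ℝ, ∀ k, s.esymm k = esymm n k x := by
  obtain ⟨l, rfl⟩ := s.exists_rep
  have h' : l.length = n := by simpa using h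
  subst h'
  refine ⟨l.get, fun k => ?_⟩
  rw [esymm_eq_multiset]
  congr 1
  rw [Fin.univ_val_map]
  exact congrArg _ (List.ofFn_get l).symm


lemma sq_sum_ident {ι : Type*} [DecidableEq ι] (u : Finset ι) (y : ι → ℝ) :
    (∑ i ∈ u, y i) ^ 2 =
      ∑ i ∈ u, y i ^ 2 + 2 * ∑ s ∈ u.powersetCard 2, ∏ i ∈ s, y i := by
  induction u using Finset.induction with
  | empty =>
    have h : Finset.powersetCard 2 (∅ : Finset ι) = ∅ :=
      Finset.powersetCard_eq_empty.2 (by simp)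
    simp [h]
  | @insert a u ha ih =>
    have hdisj : Disjoint (u.powersetCard 2) ((u.powersetCard 1).image (insert a)) := by
      rw [Finset.disjoint_left]
      intro t ht ht'
      obtain ⟨t', ht', rfl⟩ := Finset.mem_image.1 ht'
      exact ha ((Finset.mem_powersetCard.1 ht).1 (Finset.mem_insert_self a t'))
    rw [Finset.sum_insert ha, Finset.sum_insert ha, Finset.powersetCard_succ_insert ha,
      Finset.sum_union hdisj]
    have himg : ∑ t ∈ (u.powersetCard 1).image (insert a), ∏ i ∈ t, y i
        = y a * ∑ i ∈ u, y i := by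
      rw [Finset.sum_image]
      · rw [Finset.powersetCard_one, Finset.sum_map, Finset.mul_sum]
        apply Finset.sum_congr rfl
        intro i hi
        have hai : a ∉ ({i} : Finset ι) := by
          simp only [Finset.mem_singleton]; rintro rfl; exact ha hi
        simp only [Function.Embedding.coeFn_mk]
        rw [Finset.prod_insert hai, Finset.prod_singleton]
      · intro t1 h1 t2 h2 hins
        have ha1 : a ∉ t1 := fun h => ha ((Finset.mem_powersetCard.1 h1).1 h)
        have ha2 : a ∉ t2 := fun h => ha ((Finset.mem_powersetCard.1 h2).1 h)
        rw [← Finset.erase_insert ha1, ← Finset.erase_insert ha2, hins]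
    rw [himg]
    linear_combination ih

lemma sum_prod_compl (n k : ℕ) (hk : k ≤ n) (x : Fin n → ℝ) :
    ∑ s ∈ Finset.powersetCard k (Finset.univ : Finset (Fin n)), ∏ i ∈ sᶜ, x i
      = esymm n (n - k) x := by
  rw [esymm]
  refine Finset.sum_nbij' (i := fun s => sᶜ) (j := fun s => sᶜ) ?_ ?_ ?_ ?_ ?_
  · intro s hs
    rw [Finset.mem_powersetCard_univ] at hs ⊢
    rw [Finset.card_compl, hs, Fintype.card_fin]
  · intro s hs
    rw [Finset.mem_powersetCard_univ] at hs ⊢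
    rw [Finset.card_compl, hs, Fintype.card_fin]
    omega
  · intro s _; exact compl_compl s
  · intro s _; exact compl_compl s
  · intro s _; rfl

lemma bottom_case (n : ℕ) (y : Fin n → ℝ) :
    2 * (n : ℝ) * esymm n 2 y ≤ ((n : ℝ) - 1) * (esymm n 1 y) ^ 2 := by
  have hcs : (∑ i, y i) ^ 2 ≤ (n : ℝ) * ∑ i, y i ^ 2 := by
    have := sq_sum_le_card_mul_sum_sq (s := (Finset.univ : Finset (Fin n))) (f := y)
    simpa using this
  have hid := sq_sum_ident Finset.univ y
  rw [esymm_one']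
  have h2 : 2 * esymm n 2 y = (∑ i, y i) ^ 2 - ∑ i, y i ^ 2 := by
    rw [esymm]; linarith [hid]
  nlinarith [hcs, h2]

lemma top_case (n : ℕ) (hn : 2 ≤ n) (x : Fin n → ℝ) :
    2 * (n : ℝ) * (esymm n (n - 2) x * esymm n n x) ≤
      ((n : ℝ) - 1) * (esymm n (n - 1) x) ^ 2 := by
  set q : Fin n → ℝ := fun i => ∏ j ∈ Finset.univ.erase i, x j with hq
  have h1 : esymm n 1 q = esymm n (n - 1) x := by
    rw [esymm_one', ← sum_prod_compl n 1 (by omega) x, Finset.powersetCard_one, Finset.sum_map]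
    refine Finset.sum_congr rfl fun i _ => ?_
    simp only [Function.Embedding.coeFn_mk, hq]
    rw [Finset.compl_singleton]
  have h2 : esymm n 2 q = esymm n n x * esymm n (n - 2) x := by
    · rw [esymm, ← sum_prod_compl n 2 hn x, Finset.mul_sum]
      refine Finset.sum_congr rfl fun s hs => ?_
      rw [Finset.mem_powersetCard_univ] at hs
      obtain ⟨i, j, hij, rfl⟩ := Finset.card_eq_two.1 hs
      have hcompl : ({i, j} : Finset (Fin n))ᶜ = (Finset.univ.erase i).erase j := by
        ext a
        simp only [Finset.mem_compl, Finset.mem_insert, Finset.mem_singleton,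
          Finset.mem_erase, Finset.mem_univ, and_true]
        tauto
      have hcompl' : ({i, j} : Finset (Fin n))ᶜ = (Finset.univ.erase j).erase i := by
        ext a
        simp only [Finset.mem_compl, Finset.mem_insert, Finset.mem_singleton,
          Finset.mem_erase, Finset.mem_univ, and_true]
        tauto
      have hji : j ∈ Finset.univ.erase i :=
        Finset.mem_erase.2 ⟨Ne.symm hij, Finset.mem_univ j⟩
      have hij' : i ∈ Finset.univ.erase j :=
        Finset.mem_erase.2 ⟨hij, Finset.mem_univ i⟩
      have hqi : q i = x j * ∏ l ∈ ({i, j} : Finset (Fin n))ᶜ, x l := by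
        rw [hq, hcompl]; exact (Finset.mul_prod_erase _ _ hji).symm
      have hqj : q j = x i * ∏ l ∈ ({i, j} : Finset (Fin n))ᶜ, x l := by
        rw [hq, hcompl']; exact (Finset.mul_prod_erase _ _ hij').symm
      have hprod : ∏ l, x l = x i * q i := by
        rw [hq]; exact (Finset.mul_prod_erase _ _ (Finset.mem_univ i)).symm
      rw [Finset.prod_pair hij, esymm_top, hprod, hqi, hqj]
      ring
  have hb := bottom_case n q
  rw [h1, h2] at hb
  nlinarith [hb]

open Polynomial in
lemma deriv_step (s : Multiset ℝ) (n : ℕ) (hn : Multiset.card s = n) (h1 : 1 ≤ n) :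
    ∃ t : Multiset ℝ, Multiset.card t = n - 1 ∧
      ∀ i : ℕ, i ≤ n - 1 →
        Multiset.esymm t i = (((n : ℝ) - i) / n) * s.esymm i := by
  have hNpos : (0 : ℝ) < n := by exact_mod_cast h1
  set P : ℝ[X] := (s.map fun a => X - C a).prod with hPdef
  have hmonic : P.Monic := monic_multiset_prod_of_monic _ _ fun a _ => monic_X_sub_C a
  have hdeg : P.natDegree = n := by
    rw [hPdef, natDegree_multiset_prod_X_sub_C_eq_card, hn]
  have hroots : P.roots = s := roots_multiset_prod_X_sub_C s
  set Q : ℝ[X] := derivative P with hQdef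
  have hQcoeff : Q.coeff (n - 1) = n := by
    rw [hQdef, coeff_derivative]
    have : n - 1 + 1 = n := by omega
    rw [this]
    rw [show P.coeff n = 1 from hdeg ▸ hmonic.coeff_natDegree,
      Nat.cast_sub h1]
    push_cast
    ring
  have hQne : Q ≠ 0 := fun h => by
    rw [h, coeff_zero] at hQcoeff; exact absurd hQcoeff.symm (by positivity)
  have hQdegle : Q.natDegree ≤ n - 1 := by
    have h := natDegree_derivative_le P
    rw [hdeg] at h
    exact h
  have hcard1 : n ≤ Multiset.card Q.roots + 1 := by
    have := P.card_roots_le_derivative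
    rw [hroots, hn] at this
    exact this
  have hcard2 : Multiset.card Q.roots ≤ Q.natDegree := Q.card_roots' 
  have hcardQ : Multiset.card Q.roots = n - 1 := by omega
  have hQdeg : Q.natDegree = n - 1 := by omega
  have hsplits : Q.Splits := splits_iff_card_roots.2 (by rw [hcardQ, hQdeg])
  have hlead : Q.leadingCoeff = n := by
    rw [leadingCoeff, hQdeg, hQcoeff]
  have hfact : Q = C (n : ℝ) * (Q.roots.map fun a => X - C a).prod := by
    rw [← hlead]
    exact hsplits.eq_prod_roots
  refine ⟨Q.roots, hcardQ, fun i hi => ?_⟩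
  have hm : n - 1 - i + 1 = n - i := by omega
  have hmn : n - 1 - i + 1 ≤ n := by omega
  have e1 : Q.coeff (n - 1 - i) = P.coeff (n - 1 - i + 1) * (n - 1 - i + 1 : ℕ) := by
    rw [hQdef, coeff_derivative]; push_cast; ring
  have e2 : P.coeff (n - 1 - i + 1) = (-1) ^ i * s.esymm i := by
    rw [hPdef, Multiset.prod_X_sub_C_coeff s (by omega : n - 1 - i + 1 ≤ Multiset.card s)]
    congr 2 <;> omega
  have e3 : Q.coeff (n - 1 - i) = (n : ℝ) * ((-1) ^ i * Q.roots.esymm i) := by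
    conv_lhs => rw [hfact]
    rw [coeff_C_mul]
    rw [Multiset.prod_X_sub_C_coeff Q.roots (by omega : n - 1 - i ≤ Multiset.card Q.roots)]
    congr 3 <;> omega
  have e4 : (n : ℝ) * ((-1) ^ i * Q.roots.esymm i) =
      ((-1) ^ i * s.esymm i) * ((n : ℝ) - i) := by
    have hc : ((n - 1 - i + 1 : ℕ) : ℝ) = (n : ℝ) - i := by
      rw [hm]; exact Nat.cast_sub (by omega)
    rw [← e3, e1, e2, hc]
  have hne : ((-1 : ℝ) ^ i) ≠ 0 := pow_ne_zero _ (by norm_num)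
  have key : ((-1 : ℝ) ^ i) * Multiset.esymm Q.roots i =
      ((-1 : ℝ) ^ i) * ((((n : ℝ) - i) / n) * s.esymm i) := by
    rw [div_mul_eq_mul_div, mul_div_assoc', eq_div_iff hNpos.ne']
    linear_combination e4
  exact mul_left_cancel₀ hne key

lemma choose_pred_real (n i : ℕ) (h1 : 1 ≤ n) (hi : i ≤ n) :
    (((n - 1).choose i : ℕ) : ℝ) = (((n : ℝ) - i) / n) * (n.choose i) := by
  have key : n * (n - 1).choose i = n.choose i * (n - i) := by
    cases n with
    | zero => omega
    | succ m =>
      rw [Nat.succ_sub_one, Nat.add_one_mul_choose_eq, Nat.choose_succ_right_eq]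
  have hkey : ((n : ℝ)) * ((n - 1).choose i) = (n.choose i : ℝ) * ((n : ℝ) - i) := by
    have := congrArg (fun m : ℕ => (m : ℝ)) key
    push_cast [Nat.cast_sub hi] at this
    convert this using 2 <;> push_cast <;> ring
  have hN : (0 : ℝ) < n := by exact_mod_cast h1
  field_simp
  linear_combination hkey

theorem newton_ineq (n : ℕ) :
    ∀ (s : Multiset ℝ), Multiset.card s = n → ∀ j : ℕ, j + 2 ≤ n →
      ((n.choose (j + 1) : ℕ) : ℝ) ^ 2 * (s.esymm j * s.esymm (j + 2)) ≤
        ((n.choose j : ℕ) : ℝ) * ((n.choose (j + 2) : ℕ) : ℝ) * (s.esymm (j + 1)) ^ 2 := by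
  induction n using Nat.strong_induction_on with
  | _ n ih =>
    intro s hc j hj
    rcases eq_or_lt_of_le hj with heq | hlt
    · -- top case : j + 2 = n
      subst heq
      obtain ⟨x, hx⟩ := multiset_to_vec s (j + 2) hc
      rw [hx j, hx (j + 1), hx (j + 2)]
      have htop := top_case (j + 2) (by omega) x
      rw [show j + 2 - 2 = j from rfl, show j + 2 - 1 = j + 1 from rfl] at htop
      have hch1 : (j + 2).choose (j + 1) = j + 2 := by
        have h := Nat.choose_symm (n := j + 2) (k := 1) (by omega)
        rw [Nat.choose_one_right] at h
        exact h
      have hch0 : (j + 2).choose j = (j + 2).choose 2 :=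
        Nat.choose_symm (n := j + 2) (k := 2) (by omega)
      have hch2 : (j + 2).choose (j + 2) = 1 := Nat.choose_self _
      have hch2n : (j + 2).choose 2 * 2 = (j + 2) * (j + 1) := by
        rw [Nat.choose_two_right]
        exact Nat.div_mul_cancel (Nat.even_mul_pred_self (j + 2)).two_dvd
      have hch2' : (((j + 2).choose 2 : ℕ) : ℝ) * 2 = ((j : ℝ) + 2) * ((j : ℝ) + 1) := by
        exact_mod_cast congrArg (fun m : ℕ => (m : ℝ)) hch2n
      rw [hch1, hch0, hch2]
      push_cast at htop ⊢
      have h3 := mul_le_mul_of_nonneg_left htop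
        (show (0 : ℝ) ≤ ((j : ℝ) + 2) / 2 by positivity)
      nlinarith [h3, hch2']
    · -- inductive case : j + 2 < n
      have h1n : 1 ≤ n := by omega
      obtain ⟨t, hct, hrel⟩ := deriv_step s n hc h1n
      have ihn := ih (n - 1) (by omega) t hct j (by omega)
      have hN : (0 : ℝ) < n := by exact_mod_cast h1n
      rw [hrel j (by omega), hrel (j + 1) (by omega), hrel (j + 2) (by omega)] at ihn
      rw [choose_pred_real n j h1n (by omega), choose_pred_real n (j + 1) h1n (by omega),
        choose_pred_real n (j + 2) h1n (by omega)] at ihn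
      push_cast at ihn ⊢
      have hj0 : (0 : ℝ) < (n : ℝ) - j := by
        have : (j : ℝ) < n := by exact_mod_cast (by omega : j < n)
        linarith
      have hj1 : (0 : ℝ) < (n : ℝ) - (j + 1) := by
        have : ((j : ℝ) + 1) < n := by exact_mod_cast (by omega : j + 1 < n)
        linarith
      have hj2 : (0 : ℝ) < (n : ℝ) - (j + 2) := by
        have : ((j : ℝ) + 2) < n := by exact_mod_cast (by omega : j + 2 < n)
        linarith
      set N := (n : ℝ)
      set a := s.esymm j
      set b := s.esymm (j + 1)
      set c := s.esymm (j + 2)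
      set c0 := ((n.choose j : ℕ) : ℝ)
      set c1 := ((n.choose (j + 1) : ℕ) : ℝ)
      set c2 := ((n.choose (j + 2) : ℕ) : ℝ)
      -- ihn is the primed inequality; cancel the positive factor
      have hD : (0 : ℝ) < (N - j) * (N - (j + 1)) ^ 2 * (N - (j + 2)) / N ^ 4 := by positivity
      calc c1 ^ 2 * (a * c)
          = (N ^ 4 / ((N - j) * (N - (j + 1)) ^ 2 * (N - (j + 2)))) *
            (((N - (j + 1)) / N * c1) ^ 2 * ((N - j) / N * a * ((N - (j + 2)) / N * c))) := by
            field_simp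
        _ ≤ (N ^ 4 / ((N - j) * (N - (j + 1)) ^ 2 * (N - (j + 2)))) *
            ((N - j) / N * c0 * ((N - (j + 2)) / N * c2) * ((N - (j + 1)) / N * b) ^ 2) := by
            apply mul_le_mul_of_nonneg_left _ (by positivity)
            exact_mod_cast ihn
        _ = c0 * c2 * b ^ 2 := by
            field_simp

lemma esymm_pos {n k : ℕ} {lam : Fin n → ℝ} (h : lam ∈ GammaCone n k)
    {i : ℕ} (hik : i ≤ k) : 0 < esymm n i lam := by
  rcases Nat.eq_zero_or_pos i with hi | hi
  · rw [hi, esymm_zero']; norm_num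
  · exact h i hi hik

lemma newton_vec (n : ℕ) (x : Fin n → ℝ) (j : ℕ) (hj : j + 2 ≤ n) :
    ((n.choose (j + 1) : ℕ) : ℝ) ^ 2 * (esymm n j x * esymm n (j + 2) x) ≤
      ((n.choose j : ℕ) : ℝ) * ((n.choose (j + 2) : ℕ) : ℝ) * (esymm n (j + 1) x) ^ 2 := by
  have h := newton_ineq n (Finset.univ.val.map x) (by simp) j hj
  rw [← esymm_eq_multiset n j x, ← esymm_eq_multiset n (j + 1) x,
    ← esymm_eq_multiset n (j + 2) x] at h
  exact h

lemma newt_div (n k : ℕ) (hkn : k ≤ n) (j : ℕ) (hj : j + 2 ≤ k) (lam : Fin n → ℝ) :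
    esymm n j lam * esymm n (j + 2) lam ≤
      (((n.choose j : ℕ) : ℝ) * ((n.choose (j + 2) : ℕ) : ℝ) /
        ((n.choose (j + 1) : ℕ) : ℝ) ^ 2) * (esymm n (j + 1) lam) ^ 2 := by
  have h := newton_vec n lam j (by omega)
  have hpos : (0 : ℝ) < ((n.choose (j + 1) : ℕ) : ℝ) ^ 2 := by
    have := Nat.choose_pos (show j + 1 ≤ n by omega)
    have : (0 : ℝ) < ((n.choose (j + 1) : ℕ) : ℝ) := by exact_mod_cast this
    positivity
  rw [div_mul_eq_mul_div, le_div_iff₀ hpos]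
  linarith [h]

lemma choose_cast_pos (n i : ℕ) (h : i ≤ n) : (0 : ℝ) < ((n.choose i : ℕ) : ℝ) := by
  exact_mod_cast Nat.choose_pos h

lemma claim1 (n k : ℕ) (hk2 : 2 ≤ k) (hkn : k ≤ n) :
    ∀ d : ℕ, d ≤ k - 2 → ∃ C : ℝ, 0 < C ∧ ∀ lam ∈ GammaCone n k,
      esymm n k lam * esymm n (k - 2 - d) lam ≤
        C * esymm n (k - 1) lam * esymm n (k - 1 - d) lam := by
  intro d
  induction d with
  | zero =>
    intro _
    refine ⟨((n.choose (k - 2) : ℕ) : ℝ) * ((n.choose k : ℕ) : ℝ) /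
      ((n.choose (k - 1) : ℕ) : ℝ) ^ 2, by
        have h1 := choose_cast_pos n (k - 2) (by omega)
        have h2 := choose_cast_pos n k hkn
        have h3 := choose_cast_pos n (k - 1) (by omega)
        positivity, ?_⟩
    intro lam hlam
    have h := newt_div n k hkn (k - 2) (by omega) lam
    rw [show k - 2 + 2 = k by omega, show k - 2 + 1 = k - 1 by omega] at h
    simp only [Nat.sub_zero]
    nlinarith [h]
  | succ d ihd =>
    intro hd
    obtain ⟨C, hC, hCle⟩ := ihd (by omega)
    have h2 := fun lam => newt_div n k hkn (k - 2 - (d + 1)) (by omega) lam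
    set Dm : ℝ := ((n.choose (k - 2 - (d + 1)) : ℕ) : ℝ) *
        ((n.choose (k - 1 - d) : ℕ) : ℝ) / ((n.choose (k - 2 - d) : ℕ) : ℝ) ^ 2 with hDm
    have hDmpos : 0 < Dm := by
      have h1 := choose_cast_pos n (k - 2 - (d + 1)) (by omega)
      have h2 := choose_cast_pos n (k - 1 - d) (by omega)
      have h3 := choose_cast_pos n (k - 2 - d) (by omega)
      positivity
    refine ⟨C * Dm, by positivity, ?_⟩
    intro lam hlam
    have hnewt := h2 lam
    rw [show k - 2 - (d + 1) + 2 = k - 1 - d by omega,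
      show k - 2 - (d + 1) + 1 = k - 2 - d by omega] at hnewt
    have hIH := hCle lam hlam
    have pk : (0 : ℝ) < esymm n k lam := esymm_pos hlam le_rfl
    have p1 : (0 : ℝ) < esymm n (k - 1 - d) lam := esymm_pos hlam (by omega)
    have p2 : (0 : ℝ) < esymm n (k - 2 - d) lam := esymm_pos hlam (by omega)
    have pk1 : (0 : ℝ) < esymm n (k - 1) lam := esymm_pos hlam (by omega)
    rw [show k - 1 - (d + 1) = k - 2 - d by omega]
    refine le_of_mul_le_mul_right ?_ p1
    calc esymm n k lam * esymm n (k - 2 - (d + 1)) lam * esymm n (k - 1 - d) lam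
        = esymm n k lam * (esymm n (k - 2 - (d + 1)) lam * esymm n (k - 1 - d) lam) := by
          ring
      _ ≤ esymm n k lam * (Dm * esymm n (k - 2 - d) lam ^ 2) :=
          mul_le_mul_of_nonneg_left hnewt pk.le
      _ = (Dm * esymm n (k - 2 - d) lam) * (esymm n k lam * esymm n (k - 2 - d) lam) := by
          ring
      _ ≤ (Dm * esymm n (k - 2 - d) lam) *
            (C * esymm n (k - 1) lam * esymm n (k - 1 - d) lam) :=
          mul_le_mul_of_nonneg_left hIH (by positivity)
      _ = C * Dm * esymm n (k - 1) lam * esymm n (k - 2 - d) lam *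
            esymm n (k - 1 - d) lam := by ring

lemma claim2 (n k : ℕ) (hk2 : 2 ≤ k) (hkn : k ≤ n) :
    ∀ d : ℕ, 1 ≤ d → d ≤ k - 1 → ∃ C : ℝ, 0 < C ∧ ∀ lam ∈ GammaCone n k,
      esymm n k lam ^ (d - 1) * esymm n 1 lam ≤
        C * esymm n (k - 1) lam ^ (d - 1) * esymm n d lam := by
  intro d
  induction d with
  | zero => omega
  | succ d ihd =>
    intro _ hd
    rcases Nat.eq_zero_or_pos d with rfl | hd1
    · exact ⟨1, one_pos, fun lam _ => by simp⟩
    · obtain ⟨C, hC, hCle⟩ := ihd hd1 (by omega)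
      obtain ⟨C₁, hC₁, hC₁le⟩ := claim1 n k hk2 hkn (k - 2 - d) (by omega)
      rw [show k - 2 - (k - 2 - d) = d by omega, show k - 1 - (k - 2 - d) = d + 1 by omega]
        at hC₁le
      refine ⟨C * C₁, by positivity, ?_⟩
      intro lam hlam
      have hIH := hCle lam hlam
      have h1 := hC₁le lam hlam
      have pk : (0 : ℝ) < esymm n k lam := esymm_pos hlam le_rfl
      have pk1 : (0 : ℝ) < esymm n (k - 1) lam := esymm_pos hlam (by omega)
      have hpowpos : (0 : ℝ) < esymm n (k - 1) lam ^ (d - 1) := pow_pos pk1 _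
      rw [show d + 1 - 1 = d from rfl]
      have hstep : esymm n k lam ^ d * esymm n 1 lam =
          esymm n k lam * (esymm n k lam ^ (d - 1) * esymm n 1 lam) := by
        rw [← mul_assoc, ← pow_succ']
        congr 2
        omega
      rw [hstep]
      calc esymm n k lam * (esymm n k lam ^ (d - 1) * esymm n 1 lam)
          ≤ esymm n k lam * (C * esymm n (k - 1) lam ^ (d - 1) * esymm n d lam) := by
            apply mul_le_mul_of_nonneg_left _ pk.le
            exact hIH
        _ = (C * esymm n (k - 1) lam ^ (d - 1)) * (esymm n k lam * esymm n d lam) := by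
            ring
        _ ≤ (C * esymm n (k - 1) lam ^ (d - 1)) *
              (C₁ * esymm n (k - 1) lam * esymm n (d + 1) lam) := by
            apply mul_le_mul_of_nonneg_left h1 (by positivity)
        _ = C * C₁ * esymm n (k - 1) lam ^ d * esymm n (d + 1) lam := by
            have hE : esymm n (k - 1) lam ^ d =
                esymm n (k - 1) lam ^ (d - 1) * esymm n (k - 1) lam := by
              rw [← pow_succ]
              congr 1
              omega
            rw [hE]
            ring

/-- For `2 ≤ k ≤ n` there is a constant `c₀ > 0` depending only on `n` and `k`
such that `σ_{k−1}(λ) ≥ c₀ σ_k(λ)^{1−1/(k−1)} σ_1(λ)^{1/(k−1)}` for all `λ ∈ Γ_k`. -/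
theorem statement_19 (n k : ℕ) (hk2 : 2 ≤ k) (hkn : k ≤ n) :
    ∃ c₀ : ℝ, 0 < c₀ ∧ ∀ lam : Fin n → ℝ, lam ∈ GammaCone n k →
      c₀ * esymm n k lam ^ ((1 : ℝ) - 1 / ((k : ℝ) - 1)) *
          esymm n 1 lam ^ ((1 : ℝ) / ((k : ℝ) - 1)) ≤
        esymm n (k - 1) lam := by

  obtain ⟨C, hC, hle⟩ := claim2 n k hk2 hkn (k - 1) (by omega) le_rfl
  set p : ℝ := (k : ℝ) - 1 with hp
  have hk2R : (2 : ℝ) ≤ (k : ℝ) := by exact_mod_cast hk2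
  have hppos : 0 < p := by rw [hp]; linarith
  have hCp : 0 < C ^ ((1 : ℝ) / p) := Real.rpow_pos_of_pos hC _
  refine ⟨(C ^ ((1 : ℝ) / p))⁻¹, by positivity, ?_⟩
  intro lam hlam
  have pA : 0 < esymm n k lam := esymm_pos hlam le_rfl
  have pB : 0 < esymm n 1 lam := esymm_pos hlam (by omega)
  have pE : 0 < esymm n (k - 1) lam := esymm_pos hlam (by omega)
  set A := esymm n k lam
  set B := esymm n 1 lam
  set E := esymm n (k - 1) lam
  have hcast1 : ((k - 2 : ℕ) : ℝ) = (k : ℝ) - 2 := by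
    rw [Nat.cast_sub hk2]; norm_num
  have hcast2 : ((k - 1 : ℕ) : ℝ) = (k : ℝ) - 1 := by
    rw [Nat.cast_sub (by omega)]; norm_num
  have hmain : A ^ (k - 2) * B ≤ C * E ^ (k - 1) := by
    have h := hle lam hlam
    rw [show k - 1 - 1 = k - 2 from by omega] at h
    calc A ^ (k - 2) * B ≤ C * E ^ (k - 2) * E := h
      _ = C * E ^ (k - 1) := by
          rw [mul_assoc, ← pow_succ, show k - 2 + 1 = k - 1 from by omega]
  have key : A ^ ((1 : ℝ) - 1 / p) * B ^ ((1 : ℝ) / p) =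
      (A ^ (k - 2) * B) ^ ((1 : ℝ) / p) := by
    rw [Real.mul_rpow (by positivity) pB.le]
    congr 1
    rw [← Real.rpow_natCast A (k - 2), ← Real.rpow_mul pA.le, hcast1]
    congr 1
    field_simp
    ring
  have hle2 : (A ^ (k - 2) * B) ^ ((1 : ℝ) / p) ≤ (C * E ^ (k - 1)) ^ ((1 : ℝ) / p) :=
    Real.rpow_le_rpow (by positivity) hmain (by positivity)
  have hRHS : (C * E ^ (k - 1)) ^ ((1 : ℝ) / p) = C ^ ((1 : ℝ) / p) * E := by
    rw [Real.mul_rpow hC.le (by positivity)]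
    congr 1
    rw [← Real.rpow_natCast E (k - 1), ← Real.rpow_mul pE.le, hcast2]
    rw [show ((k : ℝ) - 1) * (1 / p) = 1 by rw [hp]; field_simp; exact div_self hppos.ne']
    exact Real.rpow_one E
  calc (C ^ ((1 : ℝ) / p))⁻¹ * A ^ ((1 : ℝ) - 1 / p) * B ^ ((1 : ℝ) / p)
      = (C ^ ((1 : ℝ) / p))⁻¹ * (A ^ ((1 : ℝ) - 1 / p) * B ^ ((1 : ℝ) / p)) := by
        ring
    _ = (C ^ ((1 : ℝ) / p))⁻¹ * ((A ^ (k - 2) * B) ^ ((1 : ℝ) / p)) := by rw [key]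
    _ ≤ (C ^ ((1 : ℝ) / p))⁻¹ * (C ^ ((1 : ℝ) / p) * E) := by
        apply mul_le_mul_of_nonneg_left _ (by positivity)
        rw [← hRHS]
        exact hle2
    _ = E := by field_simp
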